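/- For the circle map f induced by f(x) = 2√x − 1 for x ∈ [0,1] and f(x) = 1 − 2√|x| for x ∈ [−1,0), normalized Lebesgue measure on [−1,1] is f-invariant. -/
import Mathlib


open MeasureTheory
open scoped ENNReal

/-- Normalized Lebesgue measure on `[-1,1]` is invariant under the circle map
`f(x) = 2√x − 1` for `x ≥ 0`, `f(x) = 1 − 2√|x|` for `x < 0`. -/
theorem stmt_16 (f : ℝ → ℝ)
    (hf : ∀ x : ℝ, f x = if 0 ≤ x then 2 * Real.sqrt x - 1
      else 1 - 2 * Real.sqrt |x|)
    (μ : Measure ℝ)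
    (hμ : μ = (2 : ℝ≥0∞)⁻¹ • (volume.restrict (Set.Icc (-1 : ℝ) 1))) :
    ∀ A : Set ℝ, MeasurableSet A → μ (f ⁻¹' A) = μ A := by
  have hfeq : f = fun x => if 0 ≤ x then 2 * Real.sqrt x - 1
      else 1 - 2 * Real.sqrt |x| := funext hf
  have hfm : Measurable f := by
    rw [hfeq]
    exact Measurable.ite measurableSet_Ici (by fun_prop) (by fun_prop)
  -- measure of a measurable set under μ
  have hμ_apply : ∀ S : Set ℝ, MeasurableSet S →
      μ S = 2⁻¹ * volume (S ∩ Set.Icc (-1 : ℝ) 1) := by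
    intro S hS
    rw [hμ, Measure.smul_apply, Measure.restrict_apply hS, smul_eq_mul]
  have hfin : IsFiniteMeasure μ := by
    constructor
    rw [hμ_apply Set.univ MeasurableSet.univ]
    simp [Real.volume_Icc]
    exact ENNReal.mul_lt_top (by simp) (by simp)
  have key : μ.map f = μ := by
    apply Measure.ext_of_Iic
    intro a
    rw [Measure.map_apply hfm measurableSet_Iic,
      hμ_apply _ (hfm measurableSet_Iic), hμ_apply _ measurableSet_Iic]
    congr 1
    have hIic : Set.Iic a ∩ Set.Icc (-1 : ℝ) 1 = Set.Icc (-1 : ℝ) (min a 1) := by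
      ext x
      simp only [Set.mem_inter_iff, Set.mem_Iic, Set.mem_Icc, le_min_iff]
      tauto
    rw [hIic, Real.volume_Icc]
    rcases le_or_gt 1 a with ha | ha
    · -- a ≥ 1 : preimage covers all of [-1,1]
      have hset : f ⁻¹' Set.Iic a ∩ Set.Icc (-1 : ℝ) 1 = Set.Icc (-1 : ℝ) 1 := by
        apply Set.inter_eq_right.mpr
        intro x hx
        simp only [Set.mem_Icc] at hx
        simp only [Set.mem_preimage, Set.mem_Iic, hf x]
        split_ifs with h
        · have h1 : Real.sqrt x ≤ 1 := by
            rw [show (1:ℝ) = Real.sqrt 1 by simp]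
            exact Real.sqrt_le_sqrt hx.2
          nlinarith
        · have h1 : (0:ℝ) ≤ Real.sqrt |x| := Real.sqrt_nonneg _
          nlinarith
      rw [hset, Real.volume_Icc, min_eq_right ha]
    rcases le_or_gt (-1) a with ha' | ha'
    · -- -1 ≤ a < 1
      set b := (a + 1) / 2 with hb
      set c := (1 - a) / 2 with hc
      have hb0 : 0 ≤ b := by rw [hb]; linarith
      have hc0 : 0 < c := by rw [hc]; linarith
      have hset : f ⁻¹' Set.Iic a ∩ Set.Icc (-1 : ℝ) 1
          = Set.Icc (-1 : ℝ) (-(c ^ 2)) ∪ Set.Icc (0 : ℝ) (b ^ 2) := by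
        ext x
        simp only [Set.mem_inter_iff, Set.mem_preimage, Set.mem_Iic, Set.mem_Icc,
          Set.mem_union, hf x]
        constructor
        · rintro ⟨hfx, hx1, hx2⟩
          split_ifs at hfx with h
          · right
            refine ⟨h, ?_⟩
            have : Real.sqrt x ≤ b := by linarith
            have := Real.sqrt_le_iff.mp (le_trans this (le_refl b)) |>.2
            · nlinarith [Real.sq_sqrt h, Real.sqrt_le_iff.mpr ⟨hb0, le_refl (b^2)⟩]
          · left
            push_neg at h
            have habs : |x| = -x := abs_of_neg h
            have h1 : c ≤ Real.sqrt (-x) := by rw [← habs]; linarith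
            have h2 : c ^ 2 ≤ -x := by
              have := (Real.le_sqrt hc0.le (by linarith : (0:ℝ) ≤ -x)).mp h1
              exact this
            exact ⟨hx1, by linarith⟩
        · rintro (⟨hx1, hx2⟩ | ⟨hx1, hx2⟩)
          · have hxneg : x < 0 := by nlinarith
            have habs : |x| = -x := abs_of_neg hxneg
            refine ⟨?_, hx1, by linarith⟩
            rw [if_neg (not_le.mpr hxneg), habs]
            have h1 : c ≤ Real.sqrt (-x) :=
              (Real.le_sqrt hc0.le (by linarith)).mpr (by linarith)
            linarith
          · refine ⟨?_, by nlinarith, by nlinarith⟩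
            rw [if_pos hx1]
            have h1 : Real.sqrt x ≤ b := Real.sqrt_le_iff.mpr ⟨hb0, by linarith⟩
            linarith
      rw [hset]
      have hdisj : Disjoint (Set.Icc (-1 : ℝ) (-(c ^ 2))) (Set.Icc (0 : ℝ) (b ^ 2)) := by
        rw [Set.disjoint_left]
        intro x hx hx'
        simp only [Set.mem_Icc] at hx hx'
        nlinarith
      rw [measure_union hdisj measurableSet_Icc, Real.volume_Icc, Real.volume_Icc,
        ← ENNReal.ofReal_add (by nlinarith) (by nlinarith)]
      congr 1
      rw [min_eq_left ha.le, hb, hc]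
      ring
    · -- a < -1 : preimage ∩ [-1,1] is empty
      have hset : f ⁻¹' Set.Iic a ∩ Set.Icc (-1 : ℝ) 1 = ∅ := by
        ext x
        simp only [Set.mem_inter_iff, Set.mem_preimage, Set.mem_Iic, Set.mem_Icc,
          Set.mem_empty_iff_false, iff_false, not_and, hf x]
        intro hfx hx1 hx2
        split_ifs at hfx with h
        · have : (0:ℝ) ≤ Real.sqrt x := Real.sqrt_nonneg _
          nlinarith
        · push_neg at h
          have habs : |x| = -x := abs_of_neg h
          have h1 : Real.sqrt |x| ≤ 1 := by
            rw [show (1:ℝ) = Real.sqrt 1 by simp]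
            exact Real.sqrt_le_sqrt (by rw [habs]; linarith)
          nlinarith
      rw [hset, measure_empty, min_eq_left ha.le]
      rw [ENNReal.ofReal_eq_zero.mpr (by linarith)]
  intro A hA
  rw [← Measure.map_apply hfm hA, key]
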